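/- Let 0 ≤ R < 1 be fixed and for κ ∈ (0,1) set ρ(κ) = (1+κ)/(1-κ) and m(κ) = ((√(ρ(κ)² - R²) - √(ρ(κ)² - 1))/√(1 - R²))². Then √(m(κ)) = 1 - 2√κ/√(1-R²) + o(√κ) as κ → 0⁺. -/

import Mathlib

theorem stmt2 (R : ℝ) (hR0 : 0 ≤ R) (hR1 : R < 1) :
    Filter.Tendsto
      (fun κ : ℝ =>
        (Real.sqrt (((Real.sqrt (((1 + κ) / (1 - κ))^2 - R^2)
            - Real.sqrt (((1 + κ) / (1 - κ))^2 - 1)) / Real.sqrt (1 - R^2))^2)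
          - 1 + 2 * Real.sqrt κ / Real.sqrt (1 - R^2)) / Real.sqrt κ)
      (nhdsWithin 0 (Set.Ioi 0)) (nhds 0) := by
  have hc : (0:ℝ) < 1 - R^2 := by nlinarith
  set b := Real.sqrt (1 - R^2) with hbdef
  have hbpos : 0 < b := Real.sqrt_pos.mpr hc
  have hb2 : b^2 = 1 - R^2 := Real.sq_sqrt hc.le
  -- the simplified function
  set h : ℝ → ℝ := fun κ =>
      4 * Real.sqrt κ / ((1-κ)^2 * ((Real.sqrt ((1 - R^2) + 4*κ/(1-κ)^2) + b) * b))
      - 2 * κ / ((1-κ) * b) with hhdef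
  have hcont : ContinuousAt h 0 := by
    apply ContinuousAt.sub
    · apply ContinuousAt.div
      · fun_prop
      · apply ContinuousAt.mul (by fun_prop)
        apply ContinuousAt.mul _ continuousAt_const
        apply ContinuousAt.add _ continuousAt_const
        apply Real.continuous_sqrt.continuousAt.comp
        apply ContinuousAt.add continuousAt_const
        apply ContinuousAt.div (by fun_prop) (by fun_prop)
        norm_num
      · norm_num
        exact ⟨(add_pos (Real.sqrt_pos.mpr hc) hbpos).ne', hbpos.ne'⟩
    · apply ContinuousAt.div (by fun_prop) (by fun_prop)
      norm_num
      simpa using hbpos.ne'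
  have h0 : h 0 = 0 := by
    simp [hhdef, Real.sqrt_zero]
  have key : Filter.Tendsto h (nhdsWithin 0 (Set.Ioi 0)) (nhds 0) := by
    have := hcont.tendsto
    rw [h0] at this
    exact this.mono_left nhdsWithin_le_nhds
  refine key.congr' ?_
  filter_upwards [Ioo_mem_nhdsGT_of_mem (by norm_num : (0:ℝ) ∈ Set.Ico 0 1)]
    with κ hκ
  obtain ⟨hκ0, hκ1⟩ := hκ
  have h1κ : (0:ℝ) < 1 - κ := by linarith
  set s := Real.sqrt κ with hsdef
  have hspos : 0 < s := Real.sqrt_pos.mpr hκ0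
  have hs2 : s^2 = κ := Real.sq_sqrt hκ0.le
  have hr1 : ((1 + κ) / (1 - κ))^2 - 1 = 4*κ/(1-κ)^2 := by
    field_simp
    ring
  have hr2 : ((1 + κ) / (1 - κ))^2 - R^2 = (1 - R^2) + 4*κ/(1-κ)^2 := by
    rw [← hr1]; ring
  set a := Real.sqrt ((1 - R^2) + 4*κ/(1-κ)^2) with hadef
  have hapos : 0 < a := Real.sqrt_pos.mpr (by positivity)
  have ha2 : a^2 = (1 - R^2) + 4*κ/(1-κ)^2 := Real.sq_sqrt (by positivity)
  have he : Real.sqrt (((1 + κ) / (1 - κ))^2 - 1) = 2*s/(1-κ) := by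
    rw [hr1, show 4*κ/(1-κ)^2 = (2*s/(1-κ))^2 by rw [div_pow]; rw [mul_pow]; rw [hs2]; ring]
    exact Real.sqrt_sq (by positivity)
  have hab : a ≥ 2*s/(1-κ) := by
    rw [← he, hadef, ← hr2]
    exact Real.sqrt_le_sqrt (by linarith [hr1, hr2, sq_nonneg R, hc])
  have hout : Real.sqrt (((Real.sqrt (((1 + κ) / (1 - κ))^2 - R^2)
      - Real.sqrt (((1 + κ) / (1 - κ))^2 - 1)) / b)^2)
      = (a - 2*s/(1-κ))/b := by
    rw [hr2, ← hadef, he]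
    exact Real.sqrt_sq (div_nonneg (by linarith [hab]) hbpos.le)
  rw [hhdef]
  simp only
  rw [hout, ← hsdef, ← hadef]
  have habpos : 0 < a + b := by linarith
  have ha2' : a^2*(1-κ)^2 = (1 - R^2)*(1-κ)^2 + 4*κ := by
    field_simp at ha2; linarith
  clear_value a b s
  clear hadef hbdef hsdef hhdef h0 hcont key h hout he hab hr1 hr2 ha2
  field_simp
  linear_combination 4*hs2 - ha2' + (1-κ)^2*hb2
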